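/- arXiv:2008.03730 — 4 statements merged into one kernel-verified Lean document; each statement's English description precedes it below -/
import Mathlib

section
/- Let G be a bipartite graph with parts A and B, each of size n. Then β(G) ≥ ⌊(1/2)·∑_{v ∈ A ∪ B} 1/(d(v)+1)⌋, where d(v) denotes the degree of vertex v in G. -/
open Finset

/-- Key numerical lemma: if `t ≤ ∑_{v ∈ A} 1/(f v + 1)`, then there is a subset `S ⊆ A`
of size `t` with `∑_{v ∈ S} (f v + 1) ≤ |A|`. -/
lemma bihole_key_sum {V : Type*} [DecidableEq V] (A : Finset V) (f : V → ℕ) (t : ℕ)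
    (ht : t ≤ A.card) (hW : (t : ℝ) ≤ ∑ v ∈ A, (1 : ℝ) / (f v + 1)) :
    ∃ S, S ⊆ A ∧ S.card = t ∧ ∑ v ∈ S, (f v + 1) ≤ A.card := by
  rcases Nat.eq_zero_or_pos t with rfl | htpos
  · exact ⟨∅, empty_subset _, card_empty, by simp⟩
  obtain ⟨S, hSmem, hSmin⟩ := (A.powersetCard t).exists_min_image
    (fun S => ∑ v ∈ S, f v) (Finset.powersetCard_nonempty.mpr ht)
  rw [Finset.mem_powersetCard] at hSmem
  obtain ⟨hSA, hScard⟩ := hSmem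
  -- exchange property: every element of `S` has `f`-value at most that of any element outside
  have hex : ∀ v ∈ S, ∀ u ∈ A, u ∉ S → f v ≤ f u := by
    intro v hv u huA huS
    by_contra hlt
    push_neg at hlt
    have hune : u ∉ S.erase v := fun h => huS (Finset.mem_of_mem_erase h)
    have hS' : insert u (S.erase v) ∈ A.powersetCard t := by
      rw [Finset.mem_powersetCard]
      refine ⟨fun x hx => ?_, ?_⟩
      · rcases Finset.mem_insert.mp hx with rfl | hx
        · exact huA
        · exact hSA (Finset.mem_of_mem_erase hx)
      · rw [Finset.card_insert_of_notMem hune, Finset.card_erase_of_mem hv, hScard]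
        omega
    have hmin := hSmin _ hS'
    rw [Finset.sum_insert hune] at hmin
    have herase : ∑ x ∈ S.erase v, f x + f v = ∑ x ∈ S, f x :=
      Finset.sum_erase_add S f hv
    omega
  have hSne : S.Nonempty := Finset.card_pos.mp (by omega)
  obtain ⟨v₀, hv₀S, hv₀max⟩ := S.exists_max_image f hSne
  set C : ℝ := (f v₀ : ℝ) + 1 with hC
  have hCpos : 0 < C := by positivity
  -- bound contributions from outside S
  have h1 : ∑ v ∈ A \ S, (1 : ℝ) / (f v + 1) ≤ ((A.card - t : ℕ) : ℝ) * (1 / C) := by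
    calc ∑ v ∈ A \ S, (1 : ℝ) / (f v + 1) ≤ (A \ S).card • (1 / C) := by
          apply Finset.sum_le_card_nsmul
          intro v hv
          rw [Finset.mem_sdiff] at hv
          have h := hex v₀ hv₀S v hv.1 hv.2
          have h' : (f v₀ : ℝ) ≤ f v := Nat.cast_le.mpr h
          apply one_div_le_one_div_of_le hCpos
          rw [hC]; linarith
      _ = ((A.card - t : ℕ) : ℝ) * (1 / C) := by
          rw [Finset.card_sdiff_of_subset hSA, hScard, nsmul_eq_mul]
  -- bound contributions from inside S
  have h2 : ∑ v ∈ S, (1 : ℝ) / (f v + 1) ≤ (t : ℝ) - (∑ v ∈ S, (f v : ℝ)) / C := by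
    have hterm : ∀ v ∈ S, (1 : ℝ) / (f v + 1) ≤ 1 - (f v : ℝ) / C := by
      intro v hv
      have hle : (f v : ℝ) + 1 ≤ C := by
        have := hv₀max v hv
        have h' : (f v : ℝ) ≤ f v₀ := Nat.cast_le.mpr this
        rw [hC]; linarith
      have hxpos : (0 : ℝ) < (f v : ℝ) + 1 := by positivity
      rw [div_le_iff₀ hxpos]
      have hfv : (0 : ℝ) ≤ (f v : ℝ) := Nat.cast_nonneg _
      have key : (f v : ℝ) * ((f v : ℝ) + 1) ≤ (f v : ℝ) * C :=
        mul_le_mul_of_nonneg_left hle hfv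
      have hdiv : (f v : ℝ) / C * ((f v : ℝ) + 1) ≤ (f v : ℝ) := by
        rw [div_mul_eq_mul_div, div_le_iff₀ hCpos]
        linarith
      nlinarith
    calc ∑ v ∈ S, (1 : ℝ) / (f v + 1) ≤ ∑ v ∈ S, (1 - (f v : ℝ) / C) :=
          Finset.sum_le_sum hterm
      _ = (t : ℝ) - (∑ v ∈ S, (f v : ℝ)) / C := by
          rw [Finset.sum_sub_distrib, Finset.sum_const, hScard, Finset.sum_div]
          simp
  have hsplit : ∑ v ∈ A \ S, (1 : ℝ) / (f v + 1) + ∑ v ∈ S, (1 : ℝ) / (f v + 1)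
      = ∑ v ∈ A, (1 : ℝ) / (f v + 1) := Finset.sum_sdiff hSA
  -- conclude: ∑_{v ∈ S} f v ≤ |A| - t
  have hcast : ((A.card - t : ℕ) : ℝ) = (A.card : ℝ) - t := by
    rw [Nat.cast_sub ht]
  have h3 : (∑ v ∈ S, (f v : ℝ)) / C ≤ ((A.card : ℝ) - t) * (1 / C) := by
    rw [← hcast]; linarith
  have h4 : (∑ v ∈ S, (f v : ℝ)) ≤ (A.card : ℝ) - t := by
    have := mul_le_mul_of_nonneg_right h3 hCpos.le
    rw [div_mul_cancel₀ _ hCpos.ne', mul_assoc, one_div_mul_cancel hCpos.ne',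
      mul_one] at this
    exact this
  refine ⟨S, hSA, hScard, ?_⟩
  have : ((∑ v ∈ S, (f v + 1) : ℕ) : ℝ) ≤ (A.card : ℝ) := by
    push_cast
    rw [Finset.sum_add_distrib, Finset.sum_const, hScard, nsmul_eq_mul, mul_one]
    push_cast
    linarith
  exact_mod_cast this
/-- Existence of a bi-hole of size `t` provided `t ≤ ∑_{v ∈ A} 1/(d(v)+1)`. -/
lemma bihole_exists {V : Type*} [Fintype V] [DecidableEq V]
    (G : SimpleGraph V) [DecidableRel G.Adj] (A B : Finset V)
    (hcard : A.card = B.card) (t : ℕ) (ht : t ≤ A.card)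
    (hW : (t : ℝ) ≤ ∑ v ∈ A, (1 : ℝ) / (G.degree v + 1)) :
    ∃ S T : Finset V, S ⊆ A ∧ T ⊆ B ∧ S.card = t ∧ T.card = t ∧
      ∀ s ∈ S, ∀ u ∈ T, ¬ G.Adj s u := by
  obtain ⟨S, hSA, hScard, hSsum⟩ := bihole_key_sum A (fun v => G.degree v) t ht hW
  set N : Finset V := S.biUnion (fun v => G.neighborFinset v) with hN
  have hNcard : N.card ≤ A.card - t := by
    have h1 : N.card ≤ ∑ v ∈ S, (G.neighborFinset v).card := Finset.card_biUnion_le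
    have h2 : ∑ v ∈ S, (G.neighborFinset v).card = ∑ v ∈ S, G.degree v := rfl
    have h3 : ∑ v ∈ S, (G.degree v + 1) = ∑ v ∈ S, G.degree v + t := by
      rw [Finset.sum_add_distrib, Finset.sum_const, hScard, smul_eq_mul, mul_one]
    omega
  have hT0 : t ≤ (B \ N).card := by
    have := Finset.le_card_sdiff N B
    omega
  obtain ⟨T, hTsub, hTcard⟩ := Finset.exists_subset_card_eq hT0
  refine ⟨S, T, hSA, fun x hx => (Finset.mem_sdiff.mp (hTsub hx)).1, hScard, hTcard, ?_⟩
  intro s hs u hu hadj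
  have huN : u ∈ N := Finset.mem_biUnion.mpr ⟨s, hs, (SimpleGraph.mem_neighborFinset G s u).mpr hadj⟩
  exact (Finset.mem_sdiff.mp (hTsub hu)).2 huN

/-- The bi-hole number `β(G)` of a bipartite graph `G` with parts `A`, `B`: the largest `k`
such that there are `S ⊆ A`, `T ⊆ B` with `|S| = |T| = k` and no edge of `G` between
`S` and `T`. -/
noncomputable def biholeNumber {V : Type*} (G : SimpleGraph V) (A B : Finset V) : ℕ :=
  sSup {k | ∃ S T : Finset V, S ⊆ A ∧ T ⊆ B ∧ S.card = k ∧ T.card = k ∧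
    ∀ s ∈ S, ∀ t ∈ T, ¬ G.Adj s t}

lemma le_biholeNumber {V : Type*} (G : SimpleGraph V) (A B : Finset V) (k : ℕ)
    (h : ∃ S T : Finset V, S ⊆ A ∧ T ⊆ B ∧ S.card = k ∧ T.card = k ∧
      ∀ s ∈ S, ∀ t ∈ T, ¬ G.Adj s t) :
    k ≤ biholeNumber G A B := by
  apply le_csSup
  · refine ⟨A.card, fun m hm => ?_⟩
    obtain ⟨S, T, hSA, _, hScard, _, _⟩ := hm
    exact hScard ▸ Finset.card_le_card hSA
  · exact h

/-- For an `n × n` bipartite graph `G` with parts `A` and `B`,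
`β(G) ≥ ⌊(1/2) · ∑_{v ∈ A ∪ B} 1/(d(v)+1)⌋`. -/
theorem bihole_caro_wei {V : Type*} [Fintype V] [DecidableEq V]
    (G : SimpleGraph V) [DecidableRel G.Adj] (n : ℕ) (A B : Finset V)
    (hdisj : Disjoint A B) (hcover : A ∪ B = Finset.univ)
    (hbip : ∀ u v, G.Adj u v → (u ∈ A ∧ v ∈ B) ∨ (u ∈ B ∧ v ∈ A))
    (hA : A.card = n) (hB : B.card = n) :
    ⌊(1 / 2 : ℝ) * ∑ v ∈ A ∪ B, (1 : ℝ) / (G.degree v + 1)⌋ ≤ (biholeNumber G A B : ℤ) := by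
  set WA : ℝ := ∑ v ∈ A, (1 : ℝ) / (G.degree v + 1) with hWA
  set WB : ℝ := ∑ v ∈ B, (1 : ℝ) / (G.degree v + 1) with hWB
  have hWApos : 0 ≤ WA := Finset.sum_nonneg fun v _ => by positivity
  have hWBpos : 0 ≤ WB := Finset.sum_nonneg fun v _ => by positivity
  have hWAle : WA ≤ (A.card : ℝ) := by
    calc WA ≤ ∑ _v ∈ A, (1 : ℝ) := Finset.sum_le_sum fun v _ => by
          rw [div_le_one (by positivity)]
          have : (0:ℝ) ≤ (G.degree v : ℝ) := Nat.cast_nonneg _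
          linarith
      _ = (A.card : ℝ) := by simp
  have hWBle : WB ≤ (B.card : ℝ) := by
    calc WB ≤ ∑ _v ∈ B, (1 : ℝ) := Finset.sum_le_sum fun v _ => by
          rw [div_le_one (by positivity)]
          have : (0:ℝ) ≤ (G.degree v : ℝ) := Nat.cast_nonneg _
          linarith
      _ = (B.card : ℝ) := by simp
  have hsum : ∑ v ∈ A ∪ B, (1 : ℝ) / (G.degree v + 1) = WA + WB :=
    Finset.sum_union hdisj
  rw [hsum]
  set z : ℤ := ⌊(1 / 2 : ℝ) * (WA + WB)⌋ with hz
  have hz0 : 0 ≤ z := Int.floor_nonneg.mpr (by positivity)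
  set t : ℕ := z.toNat with htdef
  have hzt : (z : ℝ) = (t : ℕ) := by
    rw [htdef]; exact_mod_cast (Int.toNat_of_nonneg hz0).symm
  have hzfloor : (z : ℝ) ≤ (1 / 2 : ℝ) * (WA + WB) := Int.floor_le _
  have key : t ≤ biholeNumber G A B := by
    rcases le_total WB WA with hle | hle
    · -- use side A
      have hWt : (t : ℝ) ≤ WA := by rw [← hzt]; linarith
      have htcard : t ≤ A.card := by
        have : (t : ℝ) ≤ (A.card : ℝ) := le_trans hWt hWAle
        exact_mod_cast this
      exact le_biholeNumber G A B t
        (bihole_exists G A B (by rw [hA, hB]) t htcard hWt)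
    · -- use side B
      have hWt : (t : ℝ) ≤ WB := by rw [← hzt]; linarith
      have htcard : t ≤ B.card := by
        have : (t : ℝ) ≤ (B.card : ℝ) := le_trans hWt hWBle
        exact_mod_cast this
      obtain ⟨S, T, hSB, hTA, hScard, hTcard, hno⟩ :=
        bihole_exists G B A (by rw [hA, hB]) t htcard hWt
      exact le_biholeNumber G A B t
        ⟨T, S, hTA, hSB, hTcard, hScard, fun a ha b hb hadj => hno b hb a ha hadj.symm⟩
  calc z = (t : ℤ) := by exact_mod_cast hzt
    _ ≤ (biholeNumber G A B : ℤ) := by exact_mod_cast key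
end

section
/- Let G be a bipartite graph with parts A and B, each of size n ≥ 2, let Δ_A = max_{v ∈ A} d(v) ≥ 1 and Δ_B = max_{v ∈ B} d(v) ≥ 1. Suppose a ∈ A satisfies d(a) = Δ_A, b ∈ B satisfies d(b) = Δ_B, and a is not adjacent to b. Let H be the (n−1) × (n−1) bipartite graph obtained from G by deleting a and b, with parts A' = A \ {a}, B' = B \ {b}, maximum degrees Δ_{A'}, Δ_{B'} and degrees d'(v). Then (1/2)·(1/(Δ_{A'}+1) + 1/(Δ_{B'}+1) + ∑_{v ∈ A' ∪ B'} 1/(d'(v)+1)) ≥ (1/2)·(1/(Δ_A+1) + 1/(Δ_B+1) + ∑_{v ∈ A ∪ B} 1/(d(v)+1)). -/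
open Finset

lemma aux_potential_num (x y : ℝ) (hx : 1 ≤ x) (hy : 1 ≤ y) :
    1/(x+1) + 1/(y+1) ≤ y/(x*(x+1)) + x/(y*(y+1)) := by
  have hx0 : (0:ℝ) < x := by linarith
  have hy0 : (0:ℝ) < y := by linarith
  have h1 : (0:ℝ) < x + 1 := by linarith
  have h2 : (0:ℝ) < y + 1 := by linarith
  have h3 : (0:ℝ) < x*(x+1) := mul_pos hx0 h1
  have h4 : (0:ℝ) < y*(y+1) := mul_pos hy0 h2
  have key : y/(x*(x+1)) + x/(y*(y+1)) - (1/(x+1) + 1/(y+1))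
      = (x-y)^2*(x+y+1)/((x*(x+1))*(y*(y+1))) := by
    field_simp
    ring
  have pos : (0:ℝ) ≤ (x-y)^2*(x+y+1)/((x*(x+1))*(y*(y+1))) := by
    apply div_nonneg
    · have h5 : (0:ℝ) ≤ x + y + 1 := by linarith
      positivity
    · exact le_of_lt (mul_pos h3 h4)
  linarith [key, pos]

set_option maxHeartbeats 1000000 in
/-- Case 1 of the induction. Let `G` be an `n × n` bipartite graph (`n ≥ 2`)
with parts `A`, `B`, maximum side degrees `Δ_A, Δ_B ≥ 1`, let `a ∈ A`, `b ∈ B` be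
non-adjacent vertices of maximum degree on their sides, and let `H` be the induced subgraph
on `(A \ {a}) ∪ (B \ {b})` with degrees `d'` and side maximum degrees `Δ_{A'}, Δ_{B'}`.
Then the potential of `H` is at least the potential of `G`. -/
theorem potential_case_nonadjacent {V : Type*} [Fintype V] [DecidableEq V]
    (G : SimpleGraph V) [DecidableRel G.Adj] (n : ℕ) (hn : 2 ≤ n) (A B : Finset V)
    (hdisj : Disjoint A B) (hcover : A ∪ B = Finset.univ)
    (hbip : ∀ u v, G.Adj u v → (u ∈ A ∧ v ∈ B) ∨ (u ∈ B ∧ v ∈ A))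
    (hA : A.card = n) (hB : B.card = n)
    (hΔA : 1 ≤ A.sup (fun v => G.degree v)) (hΔB : 1 ≤ B.sup (fun v => G.degree v))
    (a : V) (ha : a ∈ A) (hda : G.degree a = A.sup (fun v => G.degree v))
    (b : V) (hb : b ∈ B) (hdb : G.degree b = B.sup (fun v => G.degree v))
    (hnadj : ¬ G.Adj a b)
    (d' : V → ℕ)
    (hd' : ∀ v, d' v = ((A.erase a ∪ B.erase b).filter (fun u => G.Adj v u)).card) :
    (1 / 2 : ℝ) * ((1 : ℝ) / ((A.sup (fun v => G.degree v) : ℕ) + 1)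
        + (1 : ℝ) / ((B.sup (fun v => G.degree v) : ℕ) + 1)
        + ∑ v ∈ A ∪ B, (1 : ℝ) / (G.degree v + 1))
      ≤ (1 / 2 : ℝ) * ((1 : ℝ) / (((A.erase a).sup d' : ℕ) + 1)
        + (1 : ℝ) / (((B.erase b).sup d' : ℕ) + 1)
        + ∑ v ∈ A.erase a ∪ B.erase b, (1 : ℝ) / (d' v + 1)) := by
  set ΔA := A.sup (fun v => G.degree v) with hΔAdef
  set ΔB := B.sup (fun v => G.degree v) with hΔBdef
  -- filter descriptions
  have hfilterA : ∀ v ∈ A, (A.erase a ∪ B.erase b).filter (fun u => G.Adj v u)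
      = (G.neighborFinset v).erase b := by
    intro v hv
    ext u
    simp only [mem_filter, mem_union, mem_erase, SimpleGraph.mem_neighborFinset]
    constructor
    · rintro ⟨h1, h2⟩
      refine ⟨?_, h2⟩
      rcases h1 with ⟨_, huA⟩ | ⟨hub, _⟩
      · rcases hbip v u h2 with ⟨_, huB⟩ | ⟨hvB, _⟩
        · exact absurd huB (Finset.disjoint_left.mp hdisj huA)
        · exact absurd hvB (Finset.disjoint_right.mp hdisj hvB |> fun h => absurd hv h)
      · exact hub
    · rintro ⟨hub, h2⟩
      refine ⟨?_, h2⟩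
      right
      rcases hbip v u h2 with ⟨_, huB⟩ | ⟨hvB, _⟩
      · exact ⟨hub, huB⟩
      · exact absurd hv (Finset.disjoint_right.mp hdisj hvB)
  have hfilterB : ∀ v ∈ B, (A.erase a ∪ B.erase b).filter (fun u => G.Adj v u)
      = (G.neighborFinset v).erase a := by
    intro v hv
    ext u
    simp only [mem_filter, mem_union, mem_erase, SimpleGraph.mem_neighborFinset]
    constructor
    · rintro ⟨h1, h2⟩
      refine ⟨?_, h2⟩
      rcases h1 with ⟨hua, _⟩ | ⟨_, huB⟩
      · exact hua
      · rcases hbip v u h2 with ⟨hvA, _⟩ | ⟨_, huA⟩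
        · exact absurd hv (Finset.disjoint_left.mp hdisj hvA)
        · exact absurd huB (Finset.disjoint_left.mp hdisj huA)
    · rintro ⟨hua, h2⟩
      refine ⟨?_, h2⟩
      left
      rcases hbip v u h2 with ⟨hvA, _⟩ | ⟨_, huA⟩
      · exact absurd hv (Finset.disjoint_left.mp hdisj hvA)
      · exact ⟨hua, huA⟩
  have hd'A : ∀ v ∈ A, d' v = ((G.neighborFinset v).erase b).card := by
    intro v hv; rw [hd' v, hfilterA v hv]
  have hd'B : ∀ v ∈ B, d' v = ((G.neighborFinset v).erase a).card := by
    intro v hv; rw [hd' v, hfilterB v hv]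
  -- neighbors of b
  have hNb : (A.erase a).filter (fun v => G.Adj v b) = G.neighborFinset b := by
    ext v
    simp only [mem_filter, mem_erase, SimpleGraph.mem_neighborFinset]
    constructor
    · rintro ⟨_, hadj⟩; exact hadj.symm
    · intro hadj
      have hadj' : G.Adj v b := hadj.symm
      refine ⟨⟨?_, ?_⟩, hadj'⟩
      · rintro rfl; exact hnadj hadj'
      · rcases hbip v b hadj' with ⟨hvA, _⟩ | ⟨_, hbA⟩
        · exact hvA
        · exact absurd hb (Finset.disjoint_left.mp hdisj hbA)
  have hNa : (B.erase b).filter (fun v => G.Adj v a) = G.neighborFinset a := by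
    ext v
    simp only [mem_filter, mem_erase, SimpleGraph.mem_neighborFinset]
    constructor
    · rintro ⟨_, hadj⟩; exact hadj.symm
    · intro hadj
      have hadj' : G.Adj v a := hadj.symm
      refine ⟨⟨?_, ?_⟩, hadj'⟩
      · rintro rfl; exact hnadj hadj
      · rcases hbip v a hadj' with ⟨hvA, haB⟩ | ⟨hvB, _⟩
        · exact absurd haB (Finset.disjoint_left.mp hdisj ha)
        · exact hvB
  -- sup bounds
  have hsupA' : (A.erase a).sup d' ≤ ΔA := by
    apply Finset.sup_le
    intro v hv
    have hvA := Finset.mem_of_mem_erase hv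
    calc d' v ≤ G.degree v := by
          rw [hd'A v hvA, ← SimpleGraph.card_neighborFinset_eq_degree]
          exact Finset.card_erase_le
      _ ≤ ΔA := Finset.le_sup (f := fun v => G.degree v) hvA
  have hsupB' : (B.erase b).sup d' ≤ ΔB := by
    apply Finset.sup_le
    intro v hv
    have hvB := Finset.mem_of_mem_erase hv
    calc d' v ≤ G.degree v := by
          rw [hd'B v hvB, ← SimpleGraph.card_neighborFinset_eq_degree]
          exact Finset.card_erase_le
      _ ≤ ΔB := Finset.le_sup (f := fun v => G.degree v) hvB
  set x := (ΔA : ℝ) with hxdef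
  set y := (ΔB : ℝ) with hydef
  have hx1 : (1:ℝ) ≤ x := by rw [hxdef]; exact_mod_cast hΔA
  have hy1 : (1:ℝ) ≤ y := by rw [hydef]; exact_mod_cast hΔB
  have hx0 : (0:ℝ) < x := by linarith
  have hy0 : (0:ℝ) < y := by linarith
  -- pointwise sum bounds
  have hsumA : y / (x * (x + 1)) ≤
      ∑ v ∈ A.erase a, ((1:ℝ)/(d' v + 1) - 1/(G.degree v + 1)) := by
    have step : ∑ v ∈ A.erase a, (if G.Adj v b then (1:ℝ)/(x*(x+1)) else 0) ≤
        ∑ v ∈ A.erase a, ((1:ℝ)/(d' v + 1) - 1/(G.degree v + 1)) := by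
      apply Finset.sum_le_sum
      intro v hv
      have hvA := Finset.mem_of_mem_erase hv
      have hdle : G.degree v ≤ ΔA := Finset.le_sup (f := fun v => G.degree v) hvA
      by_cases hadj : G.Adj v b
      · have hbmem : b ∈ G.neighborFinset v := by
          rwa [SimpleGraph.mem_neighborFinset]
        have hd1 : 1 ≤ G.degree v := by
          rw [← SimpleGraph.card_neighborFinset_eq_degree]
          exact Finset.card_pos.mpr ⟨b, hbmem⟩
        have hdv : d' v = G.degree v - 1 := by
          rw [hd'A v hvA, Finset.card_erase_of_mem hbmem,
            SimpleGraph.card_neighborFinset_eq_degree]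
        rw [if_pos hadj, hdv]
        have hcast : ((G.degree v - 1 : ℕ) : ℝ) = (G.degree v : ℝ) - 1 := by
          push_cast [Nat.cast_sub hd1]; ring
        rw [hcast]
        set D := (G.degree v : ℝ) with hDdef
        have hD1 : (1:ℝ) ≤ D := by rw [hDdef]; exact_mod_cast hd1
        have hDM : D ≤ x := by rw [hDdef, hxdef]; exact_mod_cast hdle
        have heq : (1:ℝ)/(D - 1 + 1) - 1/(D+1) = 1/(D*(D+1)) := by
          have h1 : D ≠ 0 := by linarith
          have h2 : D + 1 ≠ 0 := by linarith
          field_simp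
          rw [sub_add_cancel, div_sub_one h1, add_sub_cancel_left, mul_one_div_cancel h1]
        rw [heq]
        apply one_div_le_one_div_of_le
        · have : (0:ℝ) < D := by linarith
          nlinarith
        · nlinarith
      · rw [if_neg hadj]
        have hdv : d' v = G.degree v := by
          rw [hd'A v hvA, Finset.erase_eq_of_notMem
            (by rw [SimpleGraph.mem_neighborFinset]; exact hadj),
            SimpleGraph.card_neighborFinset_eq_degree]
        rw [hdv]
        simp
    calc y / (x * (x + 1))
        = ∑ v ∈ A.erase a, (if G.Adj v b then (1:ℝ)/(x*(x+1)) else 0) := by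
          rw [← Finset.sum_filter, Finset.sum_const, hNb,
            SimpleGraph.card_neighborFinset_eq_degree, hdb, nsmul_eq_mul, mul_one_div]
      _ ≤ _ := step
  have hsumB : x / (y * (y + 1)) ≤
      ∑ v ∈ B.erase b, ((1:ℝ)/(d' v + 1) - 1/(G.degree v + 1)) := by
    have step : ∑ v ∈ B.erase b, (if G.Adj v a then (1:ℝ)/(y*(y+1)) else 0) ≤
        ∑ v ∈ B.erase b, ((1:ℝ)/(d' v + 1) - 1/(G.degree v + 1)) := by
      apply Finset.sum_le_sum
      intro v hv
      have hvB := Finset.mem_of_mem_erase hv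
      have hdle : G.degree v ≤ ΔB := Finset.le_sup (f := fun v => G.degree v) hvB
      by_cases hadj : G.Adj v a
      · have hbmem : a ∈ G.neighborFinset v := by
          rwa [SimpleGraph.mem_neighborFinset]
        have hd1 : 1 ≤ G.degree v := by
          rw [← SimpleGraph.card_neighborFinset_eq_degree]
          exact Finset.card_pos.mpr ⟨a, hbmem⟩
        have hdv : d' v = G.degree v - 1 := by
          rw [hd'B v hvB, Finset.card_erase_of_mem hbmem,
            SimpleGraph.card_neighborFinset_eq_degree]
        rw [if_pos hadj, hdv]
        have hcast : ((G.degree v - 1 : ℕ) : ℝ) = (G.degree v : ℝ) - 1 := by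
          push_cast [Nat.cast_sub hd1]; ring
        rw [hcast]
        set D := (G.degree v : ℝ) with hDdef
        have hD1 : (1:ℝ) ≤ D := by rw [hDdef]; exact_mod_cast hd1
        have hDM : D ≤ y := by rw [hDdef, hydef]; exact_mod_cast hdle
        have heq : (1:ℝ)/(D - 1 + 1) - 1/(D+1) = 1/(D*(D+1)) := by
          have h1 : D ≠ 0 := by linarith
          have h2 : D + 1 ≠ 0 := by linarith
          field_simp
          rw [sub_add_cancel, div_sub_one h1, add_sub_cancel_left, mul_one_div_cancel h1]
        rw [heq]
        apply one_div_le_one_div_of_le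
        · have : (0:ℝ) < D := by linarith
          nlinarith
        · nlinarith
      · rw [if_neg hadj]
        have hdv : d' v = G.degree v := by
          rw [hd'B v hvB, Finset.erase_eq_of_notMem
            (by rw [SimpleGraph.mem_neighborFinset]; exact hadj),
            SimpleGraph.card_neighborFinset_eq_degree]
        rw [hdv]
        simp
    calc x / (y * (y + 1))
        = ∑ v ∈ B.erase b, (if G.Adj v a then (1:ℝ)/(y*(y+1)) else 0) := by
          rw [← Finset.sum_filter, Finset.sum_const, hNa,
            SimpleGraph.card_neighborFinset_eq_degree, hda, nsmul_eq_mul, mul_one_div]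
      _ ≤ _ := step
  rw [Finset.sum_sub_distrib] at hsumA hsumB
  -- numeric inequality
  have hnum : 1/(x+1) + 1/(y+1) ≤ y/(x*(x+1)) + x/(y*(y+1)) := aux_potential_num x y hx1 hy1
  -- sup reciprocal bounds
  have hrecA : (1:ℝ)/(x+1) ≤ 1/((((A.erase a).sup d' : ℕ) : ℝ)+1) := by
    apply one_div_le_one_div_of_le
    · positivity
    · have : (((A.erase a).sup d' : ℕ) : ℝ) ≤ x := by rw [hxdef]; exact_mod_cast hsupA'
      linarith
  have hrecB : (1:ℝ)/(y+1) ≤ 1/((((B.erase b).sup d' : ℕ) : ℝ)+1) := by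
    apply one_div_le_one_div_of_le
    · positivity
    · have : (((B.erase b).sup d' : ℕ) : ℝ) ≤ y := by rw [hydef]; exact_mod_cast hsupB'
      linarith
  -- split sums
  have hdisj' : Disjoint (A.erase a) (B.erase b) :=
    hdisj.mono (Finset.erase_subset _ _) (Finset.erase_subset _ _)
  rw [Finset.sum_union hdisj, Finset.sum_union hdisj',
    ← Finset.sum_erase_add A _ ha, ← Finset.sum_erase_add B _ hb, hda, hdb]
  push_cast
  linarith
end

section
/- Let G be a bipartite graph with parts A and B, each of size n ≥ 2, let Δ_A = max_{v ∈ A} d(v) ≥ 1 and Δ_B = max_{v ∈ B} d(v) ≥ 1. Suppose that every vertex a ∈ A with d(a) = Δ_A is adjacent to every vertex b ∈ B with d(b) = Δ_B. Fix such a and b, and let H be the (n−1) × (n−1) bipartite graph obtained from G by deleting a and b, with parts A' = A \ {a}, B' = B \ {b}, maximum degrees Δ_{A'}, Δ_{B'} and degrees d'(v). Then Δ_{A'} ≤ Δ_A − 1, Δ_{B'} ≤ Δ_B − 1, and (1/2)·(1/(Δ_{A'}+1) + 1/(Δ_{B'}+1) + ∑_{v ∈ A' ∪ B'} 1/(d'(v)+1))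 ≥ (1/2)·(1/(Δ_A+1) + 1/(Δ_B+1) + ∑_{v ∈ A ∪ B} 1/(d(v)+1)). -/
open Finset

private lemma key_abstract (p q X Y u v : ℝ)
    (hpa : p * u = X) (hqb : q * v = Y)
    (hh : p*u + q*v ≤ q*u + p*v) :
    2*X + 2*Y ≤ X + u + (Y + v) + (q-1)*u + (p-1)*v := by
  have hx1 : (q-1)*u = q*u - u := by ring
  have hx2 : (p-1)*v = p*v - v := by ring
  linarith

private lemma key_ineq (p q : ℝ) (hp : 1 ≤ p) (hq : 1 ≤ q) :
    2/(p+1) + 2/(q+1) ≤ 1/p + 1/q + (q-1)*(1/(p*(p+1))) + (p-1)*(1/(q*(q+1))) := by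
  have hp0 : 0 < p := by linarith
  have hq0 : 0 < q := by linarith
  have e1 : 1/p = 1/(p+1) + 1/(p*(p+1)) := by field_simp
  have e2 : 1/q = 1/(q+1) + 1/(q*(q+1)) := by field_simp
  have hpa : p * (1/(p*(p+1))) = 1/(p+1) := by field_simp
  have hqb : q * (1/(q*(q+1))) = 1/(q+1) := by field_simp
  rw [e1, e2]
  have h : 0 ≤ (q-p) * (1/(p*(p+1)) - 1/(q*(q+1))) := by
    rcases le_total p q with h | h
    · apply mul_nonneg (by linarith)
      have h2 : p*(p+1) ≤ q*(q+1) := by nlinarith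
      have := one_div_le_one_div_of_le (by positivity) h2
      linarith
    · have h2 : q*(q+1) ≤ p*(p+1) := by nlinarith
      have h3 := one_div_le_one_div_of_le (by positivity) h2
      have := mul_nonneg (neg_nonneg.mpr (show q - p ≤ 0 by linarith))
        (neg_nonneg.mpr (show 1/(p*(p+1)) - 1/(q*(q+1)) ≤ 0 by linarith))
      linarith [neg_mul_neg (q-p) (1/(p*(p+1)) - 1/(q*(q+1)))]
  have hh : p*(1/(p*(p+1))) + q*(1/(q*(q+1))) ≤ q*(1/(p*(p+1))) + p*(1/(q*(q+1))) := by
    nlinarith [h]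
  have e3 : 2/(p+1) = 2*(1/(p+1)) := by ring
  have e4 : 2/(q+1) = 2*(1/(q+1)) := by ring
  rw [e3, e4]
  exact key_abstract p q (1/(p+1)) (1/(q+1)) (1/(p*(p+1))) (1/(q*(q+1))) hpa hqb hh


/-- Case 2 of the induction. Let `G` be an `n × n` bipartite graph (`n ≥ 2`)
with parts `A`, `B` and maximum side degrees `Δ_A, Δ_B ≥ 1`, such that every maximum-degree
vertex of `A` is adjacent to every maximum-degree vertex of `B`. Fix maximum-degree vertices
`a ∈ A`, `b ∈ B`, and let `H` be the induced subgraph on `(A \ {a}) ∪ (B \ {b})` with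
degrees `d'` and side maximum degrees `Δ_{A'}, Δ_{B'}`. Then `Δ_{A'} ≤ Δ_A − 1`,
`Δ_{B'} ≤ Δ_B − 1`, and the potential of `H` is at least the potential of `G`. -/
theorem potential_case_adjacent {V : Type*} [Fintype V] [DecidableEq V]
    (G : SimpleGraph V) [DecidableRel G.Adj] (n : ℕ) (hn : 2 ≤ n) (A B : Finset V)
    (hdisj : Disjoint A B) (hcover : A ∪ B = Finset.univ)
    (hbip : ∀ u v, G.Adj u v → (u ∈ A ∧ v ∈ B) ∨ (u ∈ B ∧ v ∈ A))
    (hA : A.card = n) (hB : B.card = n)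
    (hΔA : 1 ≤ A.sup (fun v => G.degree v)) (hΔB : 1 ≤ B.sup (fun v => G.degree v))
    (hmaxadj : ∀ a' ∈ A, G.degree a' = A.sup (fun v => G.degree v) →
      ∀ b' ∈ B, G.degree b' = B.sup (fun v => G.degree v) → G.Adj a' b')
    (a : V) (ha : a ∈ A) (hda : G.degree a = A.sup (fun v => G.degree v))
    (b : V) (hb : b ∈ B) (hdb : G.degree b = B.sup (fun v => G.degree v))
    (d' : V → ℕ)
    (hd' : ∀ v, d' v = ((A.erase a ∪ B.erase b).filter (fun u => G.Adj v u)).card) :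
    (A.erase a).sup d' ≤ A.sup (fun v => G.degree v) - 1 ∧
    (B.erase b).sup d' ≤ B.sup (fun v => G.degree v) - 1 ∧
    (1 / 2 : ℝ) * ((1 : ℝ) / ((A.sup (fun v => G.degree v) : ℕ) + 1)
        + (1 : ℝ) / ((B.sup (fun v => G.degree v) : ℕ) + 1)
        + ∑ v ∈ A ∪ B, (1 : ℝ) / (G.degree v + 1))
      ≤ (1 / 2 : ℝ) * ((1 : ℝ) / (((A.erase a).sup d' : ℕ) + 1)
        + (1 : ℝ) / (((B.erase b).sup d' : ℕ) + 1)
        + ∑ v ∈ A.erase a ∪ B.erase b, (1 : ℝ) / (d' v + 1)) := by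
  set ΔA := A.sup (fun v => G.degree v) with hΔAd
  set ΔB := B.sup (fun v => G.degree v) with hΔBd
  have hab : G.Adj a b := hmaxadj a ha hda b hb hdb
  have hAB : ∀ v ∈ A, v ∉ B := fun v hv => disjoint_left.mp hdisj hv
  have hBA : ∀ v ∈ B, v ∉ A := fun v hv => disjoint_right.mp hdisj hv
  have hnbrA : ∀ v ∈ A, ∀ u, G.Adj v u → u ∈ B := by
    intro v hv u hadj
    rcases hbip v u hadj with ⟨_, h⟩ | ⟨h, _⟩
    · exact h
    · exact absurd h (hAB v hv)
  have hnbrB : ∀ v ∈ B, ∀ u, G.Adj v u → u ∈ A := by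
    intro v hv u hadj
    rcases hbip v u hadj with ⟨h, _⟩ | ⟨_, h⟩
    · exact absurd h (hBA v hv)
    · exact h
  have hemptyA : ∀ v ∈ A, ∀ s : Finset V, s ⊆ A →
      s.filter (fun u => G.Adj v u) = ∅ := by
    intro v hv s hs
    refine filter_false_of_mem ?_
    intro u hu hadj
    exact absurd (hnbrA v hv u hadj) (hAB u (hs hu))
  have hemptyB : ∀ v ∈ B, ∀ s : Finset V, s ⊆ B →
      s.filter (fun u => G.Adj v u) = ∅ := by
    intro v hv s hs
    refine filter_false_of_mem ?_
    intro u hu hadj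
    exact absurd (hnbrB v hv u hadj) (hBA u (hs hu))
  have hdeg : ∀ v, G.degree v = (univ.filter (fun u => G.Adj v u)).card := fun v => by
    rw [← SimpleGraph.card_neighborFinset_eq_degree, SimpleGraph.neighborFinset_eq_filter]
  have hdegA : ∀ v ∈ A, G.degree v = (B.filter (fun u => G.Adj v u)).card := by
    intro v hv
    rw [hdeg v, ← hcover, filter_union, hemptyA v hv A Finset.Subset.rfl, empty_union]
  have hdegB : ∀ v ∈ B, G.degree v = (A.filter (fun u => G.Adj v u)).card := by
    intro v hv
    rw [hdeg v, ← hcover, filter_union, hemptyB v hv B Finset.Subset.rfl, union_empty]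
  have hd'A : ∀ v ∈ A, d' v = ((B.filter (fun u => G.Adj v u)).erase b).card := by
    intro v hv
    rw [hd' v, filter_union, hemptyA v hv (A.erase a) (erase_subset a A), empty_union,
      filter_erase]
  have hd'B : ∀ v ∈ B, d' v = ((A.filter (fun u => G.Adj v u)).erase a).card := by
    intro v hv
    rw [hd' v, filter_union, hemptyB v hv (B.erase b) (erase_subset b B), union_empty,
      filter_erase]
  have hd'Aadj : ∀ v ∈ A, G.Adj v b → d' v + 1 = G.degree v := by
    intro v hv hadj
    have hmem : b ∈ B.filter (fun u => G.Adj v u) := mem_filter.mpr ⟨hb, hadj⟩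
    have hpos : 1 ≤ (B.filter (fun u => G.Adj v u)).card := card_pos.mpr ⟨b, hmem⟩
    rw [hd'A v hv, hdegA v hv, card_erase_of_mem hmem]
    omega
  have hd'Anadj : ∀ v ∈ A, ¬ G.Adj v b → d' v = G.degree v := by
    intro v hv hadj
    rw [hd'A v hv, hdegA v hv,
      erase_eq_of_notMem (fun hm => hadj (mem_filter.mp hm).2)]
  have hd'Badj : ∀ v ∈ B, G.Adj v a → d' v + 1 = G.degree v := by
    intro v hv hadj
    have hmem : a ∈ A.filter (fun u => G.Adj v u) := mem_filter.mpr ⟨ha, hadj⟩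
    have hpos : 1 ≤ (A.filter (fun u => G.Adj v u)).card := card_pos.mpr ⟨a, hmem⟩
    rw [hd'B v hv, hdegB v hv, card_erase_of_mem hmem]
    omega
  have hd'Bnadj : ∀ v ∈ B, ¬ G.Adj v a → d' v = G.degree v := by
    intro v hv hadj
    rw [hd'B v hv, hdegB v hv,
      erase_eq_of_notMem (fun hm => hadj (mem_filter.mp hm).2)]
  have hledA : ∀ v ∈ A, d' v ≤ G.degree v := by
    intro v hv
    by_cases h : G.Adj v b
    · have := hd'Aadj v hv h; omega
    · rw [hd'Anadj v hv h]
  have hledB : ∀ v ∈ B, d' v ≤ G.degree v := by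
    intro v hv
    by_cases h : G.Adj v a
    · have := hd'Badj v hv h; omega
    · rw [hd'Bnadj v hv h]
  have hΔA' : (A.erase a).sup d' ≤ ΔA - 1 := by
    apply Finset.sup_le
    intro v hv
    have hvA := mem_of_mem_erase hv
    by_cases h : G.degree v = ΔA
    · have hadj := hmaxadj v hvA h b hb hdb
      have := hd'Aadj v hvA hadj
      omega
    · have h1 : G.degree v ≤ ΔA := Finset.le_sup (f := fun v => G.degree v) hvA
      have := hledA v hvA
      omega
  have hΔB' : (B.erase b).sup d' ≤ ΔB - 1 := by
    apply Finset.sup_le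
    intro v hv
    have hvB := mem_of_mem_erase hv
    by_cases h : G.degree v = ΔB
    · have hadj : G.Adj v a := G.adj_symm (hmaxadj a ha hda v hvB h)
      have := hd'Badj v hvB hadj
      omega
    · have h1 : G.degree v ≤ ΔB := Finset.le_sup (f := fun v => G.degree v) hvB
      have := hledB v hvB
      omega
  refine ⟨hΔA', hΔB', ?_⟩
  -- cardinalities of neighbor sets
  have hcardb : ((A.erase a).filter (fun v => G.Adj v b)).card = ΔB - 1 := by
    rw [filter_erase, card_erase_of_mem
      (show a ∈ A.filter (fun v => G.Adj v b) from mem_filter.mpr ⟨ha, hab⟩)]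
    have hAb : A.filter (fun v => G.Adj v b) = A.filter (fun u => G.Adj b u) :=
      filter_congr (fun u _ => by simp [SimpleGraph.adj_comm])
    rw [hAb, ← hdegB b hb, hdb]
  have hcarda : ((B.erase b).filter (fun v => G.Adj v a)).card = ΔA - 1 := by
    rw [filter_erase, card_erase_of_mem
      (show b ∈ B.filter (fun v => G.Adj v a) from mem_filter.mpr ⟨hb, G.adj_symm hab⟩)]
    have hBa : B.filter (fun v => G.Adj v a) = B.filter (fun u => G.Adj a u) :=
      filter_congr (fun u _ => by simp [SimpleGraph.adj_comm])
    rw [hBa, ← hdegA a ha, hda]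
  have hΔA1 : (1:ℝ) ≤ (ΔA:ℝ) := by exact_mod_cast hΔA
  have hΔB1 : (1:ℝ) ≤ (ΔB:ℝ) := by exact_mod_cast hΔB
  -- sum bounds
  have hsumA : ∑ v ∈ A.erase a, (1:ℝ)/(G.degree v + 1)
      + ((ΔB:ℝ)-1) * (1/((ΔA:ℝ)*((ΔA:ℝ)+1)))
      ≤ ∑ v ∈ A.erase a, (1:ℝ)/(d' v + 1) := by
    have hconst : ((ΔB:ℝ)-1) * (1/((ΔA:ℝ)*((ΔA:ℝ)+1)))
        = ∑ v ∈ A.erase a, (if G.Adj v b then 1/((ΔA:ℝ)*((ΔA:ℝ)+1)) else 0) := by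
      rw [← sum_filter, sum_const, hcardb, nsmul_eq_mul, Nat.cast_sub hΔB, Nat.cast_one]
    rw [hconst, ← sum_add_distrib]
    apply sum_le_sum
    intro v hv
    have hvA := mem_of_mem_erase hv
    by_cases hadj : G.Adj v b
    · rw [if_pos hadj]
      have hdd := hd'Aadj v hvA hadj
      have hdpos : 1 ≤ G.degree v := by omega
      have hx1 : (1:ℝ) ≤ (G.degree v : ℝ) := by exact_mod_cast hdpos
      have hxΔ : (G.degree v : ℝ) ≤ (ΔA:ℝ) := by
        exact_mod_cast (Finset.le_sup (f := fun v => G.degree v) hvA : G.degree v ≤ ΔA)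
      have hd'cast : (d' v : ℝ) + 1 = (G.degree v : ℝ) := by exact_mod_cast hdd
      rw [hd'cast]
      set x : ℝ := (G.degree v : ℝ)
      have hxx : 1/(x+1) + 1/(x*(x+1)) = 1/x := by
        field_simp
      have hle : x*(x+1) ≤ (ΔA:ℝ)*((ΔA:ℝ)+1) := by nlinarith
      have := one_div_le_one_div_of_le (by positivity : (0:ℝ) < x*(x+1)) hle
      linarith
    · rw [if_neg hadj, hd'Anadj v hvA hadj, add_zero]
  have hsumB : ∑ v ∈ B.erase b, (1:ℝ)/(G.degree v + 1)
      + ((ΔA:ℝ)-1) * (1/((ΔB:ℝ)*((ΔB:ℝ)+1)))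
      ≤ ∑ v ∈ B.erase b, (1:ℝ)/(d' v + 1) := by
    have hconst : ((ΔA:ℝ)-1) * (1/((ΔB:ℝ)*((ΔB:ℝ)+1)))
        = ∑ v ∈ B.erase b, (if G.Adj v a then 1/((ΔB:ℝ)*((ΔB:ℝ)+1)) else 0) := by
      rw [← sum_filter, sum_const, hcarda, nsmul_eq_mul, Nat.cast_sub hΔA, Nat.cast_one]
    rw [hconst, ← sum_add_distrib]
    apply sum_le_sum
    intro v hv
    have hvB := mem_of_mem_erase hv
    by_cases hadj : G.Adj v a
    · rw [if_pos hadj]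
      have hdd := hd'Badj v hvB hadj
      have hdpos : 1 ≤ G.degree v := by omega
      have hx1 : (1:ℝ) ≤ (G.degree v : ℝ) := by exact_mod_cast hdpos
      have hxΔ : (G.degree v : ℝ) ≤ (ΔB:ℝ) := by
        exact_mod_cast (Finset.le_sup (f := fun v => G.degree v) hvB : G.degree v ≤ ΔB)
      have hd'cast : (d' v : ℝ) + 1 = (G.degree v : ℝ) := by exact_mod_cast hdd
      rw [hd'cast]
      set x : ℝ := (G.degree v : ℝ)
      have hxx : 1/(x+1) + 1/(x*(x+1)) = 1/x := by
        field_simp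
      have hle : x*(x+1) ≤ (ΔB:ℝ)*((ΔB:ℝ)+1) := by nlinarith
      have := one_div_le_one_div_of_le (by positivity : (0:ℝ) < x*(x+1)) hle
      linarith
    · rw [if_neg hadj, hd'Bnadj v hvB hadj, add_zero]
  -- split the sums
  have hsplit : ∑ v ∈ A ∪ B, (1:ℝ)/(G.degree v + 1)
      = (1:ℝ)/((ΔA:ℝ)+1) + 1/((ΔB:ℝ)+1)
        + (∑ v ∈ A.erase a, (1:ℝ)/(G.degree v + 1)
          + ∑ v ∈ B.erase b, (1:ℝ)/(G.degree v + 1)) := by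
    rw [sum_union hdisj, ← sum_erase_add A _ ha, ← sum_erase_add B _ hb, hda, hdb]
    ring
  have hsplit' : ∑ v ∈ A.erase a ∪ B.erase b, (1:ℝ)/(d' v + 1)
      = ∑ v ∈ A.erase a, (1:ℝ)/(d' v + 1) + ∑ v ∈ B.erase b, (1:ℝ)/(d' v + 1) :=
    sum_union (hdisj.mono (erase_subset a A) (erase_subset b B))
  have h1 : (1:ℝ)/(ΔA:ℝ) ≤ 1/((((A.erase a).sup d' : ℕ) : ℝ)+1) := by
    have hn : (A.erase a).sup d' + 1 ≤ ΔA := by omega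
    exact one_div_le_one_div_of_le (by positivity) (by exact_mod_cast hn)
  have h2 : (1:ℝ)/(ΔB:ℝ) ≤ 1/((((B.erase b).sup d' : ℕ) : ℝ)+1) := by
    have hn : (B.erase b).sup d' + 1 ≤ ΔB := by omega
    exact one_div_le_one_div_of_le (by positivity) (by exact_mod_cast hn)
  have hkey := key_ineq (ΔA:ℝ) (ΔB:ℝ) hΔA1 hΔB1
  rw [hsplit, hsplit']
  refine mul_le_mul_of_nonneg_left ?_ (by norm_num)
  calc (1:ℝ)/((ΔA:ℝ)+1) + 1/((ΔB:ℝ)+1)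
        + ((1:ℝ)/((ΔA:ℝ)+1) + 1/((ΔB:ℝ)+1)
          + (∑ v ∈ A.erase a, (1:ℝ)/(G.degree v + 1)
            + ∑ v ∈ B.erase b, (1:ℝ)/(G.degree v + 1)))
      = (2/((ΔA:ℝ)+1) + 2/((ΔB:ℝ)+1))
        + (∑ v ∈ A.erase a, (1:ℝ)/(G.degree v + 1)
          + ∑ v ∈ B.erase b, (1:ℝ)/(G.degree v + 1)) := by ring
    _ ≤ (1/(ΔA:ℝ) + 1/(ΔB:ℝ) + ((ΔB:ℝ)-1) * (1/((ΔA:ℝ)*((ΔA:ℝ)+1)))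
          + ((ΔA:ℝ)-1) * (1/((ΔB:ℝ)*((ΔB:ℝ)+1))))
        + (∑ v ∈ A.erase a, (1:ℝ)/(G.degree v + 1)
          + ∑ v ∈ B.erase b, (1:ℝ)/(G.degree v + 1)) := add_le_add hkey (le_refl _)
    _ = ((1:ℝ)/(ΔA:ℝ) + 1/(ΔB:ℝ))
        + ((∑ v ∈ A.erase a, (1:ℝ)/(G.degree v + 1)
            + ((ΔB:ℝ)-1) * (1/((ΔA:ℝ)*((ΔA:ℝ)+1))))
          + (∑ v ∈ B.erase b, (1:ℝ)/(G.degree v + 1)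
            + ((ΔA:ℝ)-1) * (1/((ΔB:ℝ)*((ΔB:ℝ)+1))))) := by ring
    _ ≤ (1/((((A.erase a).sup d' : ℕ) : ℝ)+1) + 1/((((B.erase b).sup d' : ℕ) : ℝ)+1))
        + (∑ v ∈ A.erase a, (1:ℝ)/(d' v + 1) + ∑ v ∈ B.erase b, (1:ℝ)/(d' v + 1)) :=
          add_le_add (add_le_add h1 h2) (add_le_add hsumA hsumB)
    _ = 1/((((A.erase a).sup d' : ℕ) : ℝ)+1) + 1/((((B.erase b).sup d' : ℕ) : ℝ)+1)
        + (∑ v ∈ A.erase a, (1:ℝ)/(d' v + 1) + ∑ v ∈ B.erase b, (1:ℝ)/(d' v + 1)) := by ring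
end

section
/- Let d ≥ 1 be an integer, let G be a bipartite graph with parts A and B, each of size n, and let v be a vertex of G with 1 ≤ d(v) ≤ d. Let G' be the graph obtained from G by deleting all edges incident to v. Then β_d(G) ≥ β_d(G'). -/
open Finset

/-- `degenBiholeNumber d G A B` is `β_d(G)`: the largest `k` such that there are `S ⊆ A`,
`T ⊆ B` with `|S| = |T| = k` and the subgraph of `G` induced on `S ∪ T` is `d`-degenerate,
i.e. every nonempty subset `s` of `S ∪ T` contains a vertex of degree at most `d` in the
subgraph induced on `s`. -/
noncomputable def degenBiholeNumber {V : Type*} [DecidableEq V] (d : ℕ)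
    (G : SimpleGraph V) [DecidableRel G.Adj] (A B : Finset V) : ℕ :=
  sSup {k | ∃ S T : Finset V, S ⊆ A ∧ T ⊆ B ∧ S.card = k ∧ T.card = k ∧
    ∀ s : Finset V, s ⊆ S ∪ T → s.Nonempty →
      ∃ v ∈ s, (s.filter (fun u => G.Adj v u)).card ≤ d}

/-- Let `d ≥ 1`, let `G` be an `n × n` bipartite graph with parts `A`, `B`,
let `v` be a vertex with `1 ≤ d(v) ≤ d`, and let `G'` be obtained from `G` by deleting all
edges incident to `v`. Then `β_d(G) ≥ β_d(G')`. -/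
theorem degen_bihole_delete_low_degree_vertex {V : Type*} [Fintype V] [DecidableEq V]
    (d : ℕ) (hd : 1 ≤ d)
    (G : SimpleGraph V) [DecidableRel G.Adj] (n : ℕ) (A B : Finset V)
    (hdisj : Disjoint A B) (hcover : A ∪ B = Finset.univ)
    (hbip : ∀ u w, G.Adj u w → (u ∈ A ∧ w ∈ B) ∨ (u ∈ B ∧ w ∈ A))
    (hA : A.card = n) (hB : B.card = n)
    (v : V) (hv1 : 1 ≤ G.degree v) (hvd : G.degree v ≤ d)
    (G' : SimpleGraph V) [DecidableRel G'.Adj]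
    (hG' : ∀ u w, G'.Adj u w ↔ (G.Adj u w ∧ u ≠ v ∧ w ≠ v)) :
    degenBiholeNumber d G' A B ≤ degenBiholeNumber d G A B := by
  unfold degenBiholeNumber
  apply csSup_le_csSup
  · refine ⟨A.card, fun k hk => ?_⟩
    obtain ⟨S, T, hSA, _, hS, _, _⟩ := hk
    exact hS ▸ Finset.card_le_card hSA
  · exact ⟨0, ∅, ∅, by simp, by simp, by simp, by simp,
      fun s hs hne => absurd (Finset.subset_empty.mp (by simpa using hs)) hne.ne_empty⟩
  · rintro k ⟨S, T, hSA, hTB, hS, hT, hdeg⟩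
    refine ⟨S, T, hSA, hTB, hS, hT, fun s hs hne => ?_⟩
    by_cases hvs : v ∈ s
    · refine ⟨v, hvs, le_trans (Finset.card_le_card ?_) hvd⟩
      intro u hu
      simp only [Finset.mem_filter] at hu
      exact (SimpleGraph.mem_neighborFinset G v u).mpr hu.2
    · obtain ⟨w, hw, hwd⟩ := hdeg s hs hne
      refine ⟨w, hw, le_trans (le_of_eq (congrArg Finset.card ?_)) hwd⟩
      apply Finset.filter_congr
      intro u hu
      simp only [hG']
      have hwv : w ≠ v := fun h => hvs (h ▸ hw)
      have huv : u ≠ v := fun h => hvs (h ▸ hu)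
      tauto
end
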